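/- arXiv:1808.06097 — 5 statements merged into one kernel-verified Lean document; each statement's English description precedes it below -/
import Mathlib

section
/- Let α and β = (β₁,…,β_k) be partitions of n such that lcm(β₁,…,β_k) = p^t for some prime p and integer t > 0. If p does not divide the degree χ^α(1^n), then χ^α(β) ≠ 0. -/
open scoped Classical

/-- A function `α : ℕ → ℕ` (listing the parts, 0-indexed, weakly decreasing,
finitely supported) is a partition of `n`. -/
def IsPartitionFun (α : ℕ → ℕ) (n : ℕ) : Prop :=
  Antitone α ∧ (Function.support α).Finite ∧ ∑ᶠ i, α i = n

/-- A list of parts (weakly decreasing, positive) is a partition of `n`. -/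
def IsPartitionList (β : List ℕ) (n : ℕ) : Prop :=
  β.Pairwise (· ≥ ·) ∧ (∀ b ∈ β, 0 < b) ∧ β.sum = n

/-- The conjugate (transpose) partition: `conjPart α j` is the number of rows `i`
with `α i > j`, i.e. the length of column `j` (0-indexed). -/
noncomputable def conjPart (α : ℕ → ℕ) (j : ℕ) : ℕ :=
  Set.ncard {i | j < α i}

/-- Hook length at the (0-indexed) node `(i, j)`. -/
noncomputable def hookLen (α : ℕ → ℕ) (i j : ℕ) : ℕ :=
  (α i - j) + (conjPart α j - i) - 1

/-- Leg length at the (0-indexed) node `(i, j)`. -/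
noncomputable def legLen (α : ℕ → ℕ) (i j : ℕ) : ℕ :=
  conjPart α j - i - 1

/-- The partition obtained by removing the rim hook of the `(i,j)`-hook. -/
noncomputable def removeHook (α : ℕ → ℕ) (i j : ℕ) : ℕ → ℕ := fun t =>
  if t < i then α t
  else if t + 1 < conjPart α j then α (t + 1) - 1
  else if t + 1 = conjPart α j then j
  else α t

/-- The value `χ^α(β)` of the irreducible character of the symmetric group
indexed by the partition `α`, at the conjugacy class of cycle type `β`,
defined via the Murnaghan–Nakayama rule. -/
noncomputable def charValue (α : ℕ → ℕ) : List ℕ → ℤ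
  | [] => if ∀ i, α i = 0 then 1 else 0
  | b :: rest =>
      ∑ᶠ (i : ℕ), ∑ᶠ (j : ℕ),
        if j < α i ∧ hookLen α i j = b then
          (-1) ^ legLen α i j * charValue (removeHook α i j) rest
        else 0

/-- The degree of `χ^α`, i.e. its value on the identity `(1^n)`. -/
noncomputable def charDegree (α : ℕ → ℕ) (n : ℕ) : ℤ :=
  charValue α (List.replicate n 1)


open Finset Function

noncomputable section BeadSide

abbrev BM (p k : ℕ) := (Fin k → ℕ) →₀ ZMod p

variable (p k : ℕ)

/-- The operator moving bead `i` down by `b` (killing states where it can't move). -/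
noncomputable def dOp (b : ℕ) (i : Fin k) : Module.End (ZMod p) (BM p k) :=
  Finsupp.lsum (ZMod p) fun v =>
    if b ≤ v i then Finsupp.lsingle (Function.update v i (v i - b)) else 0

lemma dOp_single (b : ℕ) (i : Fin k) (v : Fin k → ℕ) (c : ZMod p) :
    dOp p k b i (Finsupp.single v c) =
      if b ≤ v i then Finsupp.single (Function.update v i (v i - b)) c else 0 := by
  unfold dOp
  rw [Finsupp.lsum_single]
  split <;> simp

lemma dOp_mul (a b : ℕ) (i : Fin k) :
    dOp p k a i * dOp p k b i = dOp p k (a + b) i := by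
  apply Finsupp.lhom_ext
  intro v c
  rw [Module.End.mul_apply, dOp_single, dOp_single]
  by_cases hb : b ≤ v i
  · rw [if_pos hb, dOp_single]
    rw [Function.update_self, Function.update_idem]
    by_cases ha : a ≤ v i - b
    · rw [if_pos ha, if_pos ((Nat.le_sub_iff_add_le hb).mp ha)]
      rw [Nat.sub_sub, Nat.add_comm b a]
    · rw [if_neg ha, if_neg (fun hc => ha ((Nat.le_sub_iff_add_le hb).mpr hc))]
  · rw [if_neg hb, if_neg (by omega), map_zero]

lemma dOp_pow (m : ℕ) (i : Fin k) : dOp p k 1 i ^ m = dOp p k m i := by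
  induction m with
  | zero =>
      rw [pow_zero]
      apply Finsupp.lhom_ext
      intro v c
      rw [dOp_single, if_pos (Nat.zero_le _)]
      simp
  | succ m ih =>
      rw [pow_succ, ih, dOp_mul]

lemma dOp_comm (i j : Fin k) : Commute (dOp p k 1 i) (dOp p k 1 j) := by
  rcases eq_or_ne i j with rfl | hij
  · exact Commute.refl _
  · apply Finsupp.lhom_ext
    intro v c
    rw [Module.End.mul_apply, Module.End.mul_apply, dOp_single, dOp_single]
    by_cases hj : 1 ≤ v j <;> by_cases hi : 1 ≤ v i
    · rw [if_pos hj, if_pos hi, dOp_single, dOp_single,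
        Function.update_of_ne hij.symm, Function.update_of_ne hij, if_pos hj, if_pos hi,
        Function.update_comm hij]
    · rw [if_pos hj, if_neg hi, map_zero, dOp_single, Function.update_of_ne hij,
        if_neg hi]
    · rw [if_neg hj, if_pos hi, map_zero, dOp_single, Function.update_of_ne hij.symm,
        if_neg hj]
    · rw [if_neg hj, if_neg hi, map_zero, map_zero]

/-- The sum over all beads of the move-by-`b` operator. -/
noncomputable def SOp (b : ℕ) : Module.End (ZMod p) (BM p k) :=
  ∑ i : Fin k, dOp p k b i

variable [Fact p.Prime]

instance : Nontrivial (BM p k) :=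
  ⟨Finsupp.single (fun _ => 0) 1, 0, by
    simp [Finsupp.single_eq_zero]⟩

instance : CharP (Module.End (ZMod p) (BM p k)) p := by
  have : Nontrivial (Module.End (ZMod p) (BM p k)) := by
    refine ⟨1, 0, fun hc => ?_⟩
    have := congrArg (fun f : Module.End (ZMod p) (BM p k) =>
      f (Finsupp.single (fun _ : Fin k => 0) 1)) hc
    simpa [Finsupp.single_eq_zero] using this
  exact charP_of_injective_ringHom (algebraMap (ZMod p) _).injective p

lemma sum_pow_char_pow_of_commute {R : Type*} [Semiring R] [CharP R p] {ι : Type*}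
    (s : Finset ι) (f : ι → R) (h : ∀ i ∈ s, ∀ j ∈ s, Commute (f i) (f j)) (n : ℕ) :
    (∑ i ∈ s, f i) ^ p ^ n = ∑ i ∈ s, f i ^ p ^ n := by
  induction s using Finset.cons_induction with
  | empty => simp [zero_pow (pow_ne_zero n (Nat.Prime.ne_zero Fact.out))]
  | cons a s ha ih =>
      rw [Finset.sum_cons, Finset.sum_cons,
        add_pow_char_pow_of_commute _ _ (Commute.sum_right _ _ _
          (fun j hj => h a (Finset.mem_cons_self a s) j (Finset.mem_cons_of_mem hj))),
        ih (fun i hi j hj => h i (Finset.mem_cons_of_mem hi) j (Finset.mem_cons_of_mem hj))]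

lemma SOp_prime_pow (s : ℕ) : SOp p k (p ^ s) = SOp p k 1 ^ p ^ s := by
  unfold SOp
  rw [sum_pow_char_pow_of_commute p (R := Module.End (ZMod p) (BM p k)) _ _
    (fun i _ j _ => dOp_comm p k i j)]
  exact Finset.sum_congr rfl fun i _ => (dOp_pow p k _ i).symm

end BeadSide

noncomputable section AltSide

open Finset Function Equiv

variable (p k : ℕ)

/-- Alternating sum of basis vectors over all permutations of the bead positions. -/
noncomputable def Alt (v : Fin k → ℕ) : BM p k :=
  ∑ σ : Equiv.Perm (Fin k), (Equiv.Perm.sign σ : ℤ) • Finsupp.single (v ∘ σ) (1 : ZMod p)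

lemma Alt_comp_perm (v : Fin k → ℕ) (τ : Equiv.Perm (Fin k)) :
    Alt p k (v ∘ τ) = (Equiv.Perm.sign τ : ℤ) • Alt p k v := by
  unfold Alt
  rw [Finset.smul_sum]
  refine Eq.symm (Fintype.sum_equiv (Equiv.mulLeft τ⁻¹)
    (fun ρ => (Equiv.Perm.sign τ : ℤ) • ((Equiv.Perm.sign ρ : ℤ) • Finsupp.single (v ∘ ⇑ρ) (1 : ZMod p)))
    (fun σ => (Equiv.Perm.sign σ : ℤ) • Finsupp.single ((v ∘ ⇑τ) ∘ ⇑σ) (1 : ZMod p)) ?_)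
  intro σ
  have h1 : (v ∘ ⇑τ) ∘ ⇑(Equiv.mulLeft τ⁻¹ σ) = v ∘ ⇑σ := by
    ext t; simp [Equiv.Perm.mul_apply]
  simp only [Equiv.coe_mulLeft] at h1 ⊢
  rw [h1, Equiv.Perm.sign_mul, Equiv.Perm.sign_inv, Units.val_mul, smul_smul]

lemma Alt_of_not_injective {v : Fin k → ℕ} (hv : ¬ Function.Injective v) :
    Alt p k v = 0 := by
  simp only [Function.Injective, not_forall] at hv
  obtain ⟨a, b, hab, hne⟩ := hv
  have hvswap : v ∘ ⇑(Equiv.swap a b) = v := by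
    ext t
    rcases eq_or_ne t a with rfl | ha
    · rw [comp_apply, Equiv.swap_apply_left, hab]
    · rcases eq_or_ne t b with rfl | hb
      · rw [comp_apply, Equiv.swap_apply_right, hab]
      · rw [comp_apply, Equiv.swap_apply_of_ne_of_ne ha hb]
  unfold Alt
  apply Finset.sum_involution (fun σ _ => Equiv.swap a b * σ)
  · intro σ _
    have h1 : v ∘ ⇑(Equiv.swap a b * σ) = v ∘ ⇑σ := by
      rw [Equiv.Perm.coe_mul, ← Function.comp_assoc, hvswap]
    rw [h1, Equiv.Perm.sign_mul, Equiv.Perm.sign_swap hne]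
    have h2 : ((-1 * Equiv.Perm.sign σ : ℤˣ) : ℤ) = -(Equiv.Perm.sign σ : ℤ) := by
      push_cast; ring
    rw [h2, neg_smul, add_neg_cancel]
  · intro σ _ _
    intro hc
    have : Equiv.swap a b = 1 := by
      have := congrArg (fun ρ => ρ * σ⁻¹) hc
      simpa [mul_assoc] using this
    exact hne (by rw [← Equiv.swap_apply_left a b, this, Equiv.Perm.one_apply])
  · intro σ _; exact Finset.mem_univ _
  · intro σ _
    rw [← mul_assoc, Equiv.swap_mul_self, one_mul]

lemma perm_strictMono_eq_one {σ : Equiv.Perm (Fin k)} (h : StrictMono ⇑σ) : σ = 1 := by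
  have h2 : ∀ t, σ t = t := by
    intro t
    have h3 : (StrictMono.orderIsoOfSurjective ⇑σ h σ.surjective) t = σ t := rfl
    rw [Subsingleton.elim (StrictMono.orderIsoOfSurjective ⇑σ h σ.surjective)
      (OrderIso.refl (Fin k))] at h3
    simpa using h3.symm
  ext t
  simp [h2]

lemma Alt_apply_strictAnti {v u : Fin k → ℕ} (hv : StrictAnti v) (hu : StrictAnti u) :
    Alt p k v u = if v = u then 1 else 0 := by
  unfold Alt
  rw [Finsupp.finset_sum_apply]
  have hterm : ∀ σ : Equiv.Perm (Fin k),
      ((Equiv.Perm.sign σ : ℤ) • Finsupp.single (v ∘ ⇑σ) (1 : ZMod p)) u =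
      if v ∘ ⇑σ = u then (Equiv.Perm.sign σ : ℤ) • (1 : ZMod p) else 0 := by
    intro σ
    rw [Finsupp.smul_apply, Finsupp.single_apply]
    split <;> simp
  have hkey : ∀ σ : Equiv.Perm (Fin k), v ∘ ⇑σ = u → σ = 1 ∧ v = u := by
    intro σ hσ
    have hmono : StrictMono ⇑σ := by
      intro s t hst
      have : u s > u t := hu hst
      rw [← hσ] at this
      exact (hv.lt_iff_gt).mp this
    have h1 : σ = 1 := perm_strictMono_eq_one k hmono
    refine ⟨h1, ?_⟩
    rw [h1] at hσ
    simpa using hσ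
  rcases eq_or_ne v u with rfl | hne
  · rw [if_pos rfl, Finset.sum_eq_single 1]
    · rw [hterm]
      simp
    · intro σ _ hσ
      rw [hterm]
      rw [if_neg (fun hc => hσ (hkey σ hc).1)]
    · intro h; exact absurd (Finset.mem_univ _) h
  · rw [if_neg hne]
    apply Finset.sum_eq_zero
    intro σ _
    rw [hterm, if_neg (fun hc => hne (hkey σ hc).2)]

lemma SOp_alt (b : ℕ) (v : Fin k → ℕ) :
    SOp p k b (Alt p k v) =
      ∑ j : Fin k, if b ≤ v j then Alt p k (Function.update v j (v j - b)) else 0 := by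
  have hupd : ∀ (σ : Equiv.Perm (Fin k)) (i : Fin k) (x : ℕ),
      Function.update (v ∘ ⇑σ) i x = (Function.update v (σ i) x) ∘ ⇑σ := by
    intro σ i x
    ext t
    rcases eq_or_ne t i with rfl | hti
    · simp
    · simp [Function.update_of_ne hti,
        Function.update_of_ne (fun hc => hti (σ.injective hc))]
  unfold SOp
  rw [LinearMap.sum_apply]
  have step1 : ∀ i : Fin k, dOp p k b i (Alt p k v) =
      ∑ σ : Equiv.Perm (Fin k), (Equiv.Perm.sign σ : ℤ) •
        (if b ≤ v (σ i) then Finsupp.single ((Function.update v (σ i) (v (σ i) - b)) ∘ ⇑σ) (1 : ZMod p) else 0) := by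
    intro i
    unfold Alt
    rw [map_sum]
    apply Finset.sum_congr rfl
    intro σ _
    rw [map_zsmul, dOp_single]
    congr 1
    rcases le_or_gt b (v (σ i)) with hle | hlt
    · rw [if_pos (show b ≤ (v ∘ ⇑σ) i from hle), if_pos hle, comp_apply, hupd]
    · rw [if_neg (show ¬ b ≤ (v ∘ ⇑σ) i from not_le.mpr hlt), if_neg (not_le.mpr hlt)]
  calc ∑ i : Fin k, dOp p k b i (Alt p k v)
      = ∑ i : Fin k, ∑ σ : Equiv.Perm (Fin k), (Equiv.Perm.sign σ : ℤ) •
          (if b ≤ v (σ i) then Finsupp.single ((Function.update v (σ i) (v (σ i) - b)) ∘ ⇑σ) (1 : ZMod p) else 0) := by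
        exact Finset.sum_congr rfl fun i _ => step1 i
    _ = ∑ σ : Equiv.Perm (Fin k), ∑ i : Fin k, (Equiv.Perm.sign σ : ℤ) •
          (if b ≤ v (σ i) then Finsupp.single ((Function.update v (σ i) (v (σ i) - b)) ∘ ⇑σ) (1 : ZMod p) else 0) := Finset.sum_comm
    _ = ∑ σ : Equiv.Perm (Fin k), ∑ j : Fin k, (Equiv.Perm.sign σ : ℤ) •
          (if b ≤ v j then Finsupp.single ((Function.update v j (v j - b)) ∘ ⇑σ) (1 : ZMod p) else 0) := by
        apply Finset.sum_congr rfl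
        intro σ _
        exact Equiv.sum_comp σ (fun j => (Equiv.Perm.sign σ : ℤ) •
          (if b ≤ v j then Finsupp.single ((Function.update v j (v j - b)) ∘ ⇑σ) (1 : ZMod p) else 0))
    _ = ∑ j : Fin k, ∑ σ : Equiv.Perm (Fin k), (Equiv.Perm.sign σ : ℤ) •
          (if b ≤ v j then Finsupp.single ((Function.update v j (v j - b)) ∘ ⇑σ) (1 : ZMod p) else 0) := Finset.sum_comm
    _ = ∑ j : Fin k, if b ≤ v j then Alt p k (Function.update v j (v j - b)) else 0 := by
        apply Finset.sum_congr rfl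
        intro j _
        rcases le_or_gt b (v j) with hle | hlt
        · simp only [if_pos hle]
          rfl
        · simp only [if_neg (not_le.mpr hlt), smul_zero, Finset.sum_const_zero]

/-- Composite operator: apply `SOp b` for each entry of the list, head first. -/
noncomputable def Wop : List ℕ → Module.End (ZMod p) (BM p k)
  | [] => 1
  | b :: r => Wop r * SOp p k b

variable [Fact p.Prime]

lemma Wop_eq_pow (β : List ℕ) (hβ : ∀ b ∈ β, ∃ s, b = p ^ s) :
    Wop p k β = SOp p k 1 ^ β.sum := by
  induction β with
  | nil => rw [List.sum_nil, pow_zero]; rfl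
  | cons b r ih =>
      obtain ⟨s, rfl⟩ := hβ b (List.mem_cons_self)
      show Wop p k r * SOp p k (p ^ s) = SOp p k 1 ^ (p ^ s :: r).sum
      rw [ih (fun c hc => hβ c (List.mem_cons_of_mem _ hc)), SOp_prime_pow,
        ← pow_add, List.sum_cons, Nat.add_comm]

/-- The cycle permutation used to re-sort bead configurations after a hook removal. -/
lemma cyPerm (a d : ℕ) (h : a + d < k) :
    ∃ τ : Equiv.Perm (Fin k), (Equiv.Perm.sign τ : ℤ) = (-1) ^ d ∧
      (∀ t : Fin k, (t.1 = a → (τ t).1 = a + d) ∧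
        (a < t.1 → t.1 ≤ a + d → (τ t).1 = t.1 - 1) ∧
        (t.1 < a ∨ a + d < t.1 → τ t = t)) := by
  induction d with
  | zero =>
      exact ⟨1, by simp, fun t =>
        ⟨fun h1 => by simp [h1], fun h1 h2 => by omega, fun _ => rfl⟩⟩
  | succ d ih =>
      obtain ⟨τ, hsign, hτ⟩ := ih (by omega)
      have hx1 : a + d < k := by omega
      have hx2 : a + d + 1 < k := by omega
      set x1 : Fin k := ⟨a + d, hx1⟩ with hx1def
      set x2 : Fin k := ⟨a + d + 1, hx2⟩ with hx2def
      have hne12 : x1 ≠ x2 := by simp [hx1def, hx2def, Fin.ext_iff]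
      refine ⟨Equiv.swap x1 x2 * τ, ?_, ?_⟩
      · rw [Equiv.Perm.sign_mul, Equiv.Perm.sign_swap hne12]
        push_cast
        rw [hsign]
        ring
      · intro t
        refine ⟨?_, ?_, ?_⟩
        · intro h1
          have h2 : τ t = x1 := Fin.ext ((hτ t).1 h1)
          rw [Equiv.Perm.mul_apply, h2, Equiv.swap_apply_left]
          simp [hx2def]
          omega
        · intro h1 h2
          rw [Equiv.Perm.mul_apply]
          by_cases h3 : t.1 ≤ a + d
          · have h4 : (τ t).1 = t.1 - 1 := (hτ t).2.1 h1 h3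
            rw [Equiv.swap_apply_of_ne_of_ne
              (fun hc => by rw [hc] at h4; simp [hx1def] at h4; omega)
              (fun hc => by rw [hc] at h4; simp [hx2def] at h4; omega)]
            exact h4
          · have h5 : τ t = t := (hτ t).2.2 (Or.inr (by omega))
            have h6 : t = x2 := by
              rw [hx2def, Fin.ext_iff]
              simp
              omega
            rw [h5, h6, Equiv.swap_apply_right]
            simp only [hx1def, hx2def]
            omega
        · intro h1
          have h5 : τ t = t := (hτ t).2.2 (by omega)
          rw [Equiv.Perm.mul_apply, h5, Equiv.swap_apply_of_ne_of_ne
            (fun hc => by rw [hc, hx1def] at h1; simp at h1; all_goals omega)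
            (fun hc => by rw [hc, hx2def] at h1; simp at h1; all_goals omega)]

end AltSide

section MNSide
open Finset Function

variable {k : ℕ}

/-- The beta numbers (bead positions) of a partition, using `k` rows. -/
def bvec (α : ℕ → ℕ) (k : ℕ) : Fin k → ℕ := fun i => α i.1 + (k - 1 - i.1)

lemma bvec_strictAnti {α : ℕ → ℕ} (hα : Antitone α) : StrictAnti (bvec α k) := by
  intro i j hij
  have h1 : α j.1 ≤ α i.1 := hα (le_of_lt hij)
  have hj : j.1 < k := j.2
  have hij' : i.1 < j.1 := hij
  simp only [bvec]
  omega

lemma conj_char {α : ℕ → ℕ} (hα : Antitone α) (hz : ∀ i, k ≤ i → α i = 0) (j : ℕ) :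
    ∃ c, c ≤ k ∧ (∀ t, j < α t ↔ t < c) ∧ conjPart α j = c := by
  have hex : ∃ i, α i ≤ j := ⟨k, by rw [hz k le_rfl]; omega⟩
  have hchar : ∀ t, j < α t ↔ t < Nat.find hex := by
    intro t
    constructor
    · intro ht
      by_contra hc
      push_neg at hc
      exact absurd (le_trans (hα hc) (Nat.find_spec hex)) (not_le.mpr ht)
    · intro ht
      exact Nat.lt_of_not_le (Nat.find_min hex ht)
  refine ⟨Nat.find hex, Nat.find_le (by rw [hz k le_rfl]; omega), hchar, ?_⟩
  unfold conjPart
  have hset : {i | j < α i} = Set.Iio (Nat.find hex) := by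
    ext t
    simp only [Set.mem_setOf_eq, Set.mem_Iio]
    exact hchar t
  rw [hset, ← Finset.coe_Iio, Set.ncard_coe_finset, Nat.card_Iio]

lemma cell_data {α : ℕ → ℕ} (hα : Antitone α) (hz : ∀ i, k ≤ i → α i = 0)
    (x : Fin k) {j b : ℕ} (hj : j < α x.1) (hb : hookLen α x.1 j = b) :
    ∃ c, conjPart α j = c ∧ (∀ t, j < α t ↔ t < c) ∧ x.1 < c ∧ c ≤ k ∧ 1 ≤ b ∧
      b ≤ bvec α k x ∧ bvec α k x - b = (k - c) + j ∧
      (∀ y : Fin k, bvec α k y ≠ (k - c) + j) ∧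
      legLen α x.1 j = c - 1 - x.1 := by
  obtain ⟨c, hck, hchar, hcp⟩ := conj_char hα hz j
  have hxc : x.1 < c := (hchar x.1).mp hj
  have hxk : x.1 < k := x.2
  have hhook : α x.1 + c = b + j + x.1 + 1 := by
    unfold hookLen at hb
    rw [hcp] at hb
    omega
  have hbvx : bvec α k x = α x.1 + (k - 1 - x.1) := rfl
  refine ⟨c, hcp, hchar, hxc, hck, by omega, by omega, by omega, ?_, ?_⟩
  · intro y
    have hyk : y.1 < k := y.2
    have hbvy : bvec α k y = α y.1 + (k - 1 - y.1) := rfl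
    by_cases hyc : y.1 < c
    · have h1 : j < α y.1 := (hchar y.1).mpr hyc
      omega
    · have h1 : α y.1 ≤ j := not_lt.mp (fun hc => hyc ((hchar y.1).mp hc))
      omega
  · unfold legLen
    rw [hcp]
    omega

lemma removeHook_data {α : ℕ → ℕ} (hα : Antitone α) (hz : ∀ i, k ≤ i → α i = 0)
    (x : Fin k) {j c : ℕ} (hcp : conjPart α j = c) (hchar : ∀ t, j < α t ↔ t < c)
    (hxc : x.1 < c) (hck : c ≤ k) (hj : j < α x.1) :
    Antitone (removeHook α x.1 j) ∧ (∀ i, k ≤ i → removeHook α x.1 j i = 0) ∧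
      (∀ t : Fin k, bvec (removeHook α x.1 j) k t =
        if t.1 < x.1 then bvec α k t
        else if t.1 + 1 < c then α (t.1 + 1) + (k - 1 - (t.1 + 1))
        else if t.1 + 1 = c then (k - c) + j
        else bvec α k t) := by
  have hrh : ∀ t, removeHook α x.1 j t =
      if t < x.1 then α t else if t + 1 < c then α (t + 1) - 1
      else if t + 1 = c then j else α t := by
    intro t
    unfold removeHook
    rw [hcp]
  have h1 : ∀ t, t < c → j < α t := fun t ht => (hchar t).mpr ht
  have h2 : ∀ t, c ≤ t → α t ≤ j := fun t ht => not_lt.mp (fun hc => by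
    have := (hchar t).mp hc; omega)
  refine ⟨?_, ?_, ?_⟩
  · apply antitone_nat_of_succ_le
    intro t
    have ha1 : α (t + 1) ≤ α t := hα (by omega)
    have ha2 : α (t + 1 + 1) ≤ α (t + 1) := hα (by omega)
    rw [hrh t, hrh (t + 1)]
    by_cases hA : t + 1 < x.1
    · rw [if_pos (by omega : t < x.1), if_pos hA]
      exact ha1
    · by_cases hB : t < x.1
      · -- t + 1 = x.1
        rw [if_pos hB, if_neg hA]
        have hx1 : x.1 = t + 1 := by omega
        by_cases hC : t + 2 < c
        · rw [if_pos (by omega : t + 1 + 1 < c)]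
          omega
        · by_cases hD : t + 2 = c
          · rw [if_neg (by omega : ¬ t + 1 + 1 < c), if_pos (by omega : t + 1 + 1 = c)]
            have hj' : j < α (t + 1) := by rw [← hx1]; exact hj
            omega
          · rw [if_neg (by omega : ¬ t + 1 + 1 < c), if_neg (by omega : ¬ t + 1 + 1 = c)]
            exact ha1
      · -- x.1 ≤ t
        rw [if_neg hB, if_neg (by omega : ¬ t + 1 < x.1)]
        by_cases hF : t + 1 < c
        · rw [if_pos hF]
          have hja : j < α (t + 1) := h1 _ hF
          by_cases hG : t + 2 < c
          · rw [if_pos (by omega : t + 1 + 1 < c)]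
            omega
          · by_cases hH : t + 2 = c
            · rw [if_neg (by omega : ¬ t + 1 + 1 < c), if_pos (by omega : t + 1 + 1 = c)]
              omega
            · omega
        · by_cases hH : t + 1 = c
          · rw [if_neg hF, if_pos hH, if_neg (by omega : ¬ t + 1 + 1 < c),
              if_neg (by omega : ¬ t + 1 + 1 = c)]
            exact h2 _ (by omega)
          · rw [if_neg hF, if_neg hH, if_neg (by omega : ¬ t + 1 + 1 < c),
              if_neg (by omega : ¬ t + 1 + 1 = c)]
            exact ha1
  · intro i hi
    have hxk : x.1 < k := x.2
    rw [hrh i, if_neg (by omega), if_neg (by omega), if_neg (by omega)]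
    exact hz i hi
  · intro t
    have htk : t.1 < k := t.2
    have hbt : bvec (removeHook α x.1 j) k t = removeHook α x.1 j t.1 + (k - 1 - t.1) := rfl
    rw [hbt, hrh t.1]
    by_cases hA : t.1 < x.1
    · rw [if_pos hA, if_pos hA]
      rfl
    · rw [if_neg hA, if_neg hA]
      by_cases hB : t.1 + 1 < c
      · rw [if_pos hB, if_pos hB]
        have := h1 _ hB
        omega
      · rw [if_neg hB, if_neg hB]
        by_cases hC : t.1 + 1 = c
        · rw [if_pos hC, if_pos hC]
          omega
        · rw [if_neg hC, if_neg hC]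
          rfl

lemma move_to_cell {α : ℕ → ℕ} (hα : Antitone α) (hz : ∀ i, k ≤ i → α i = 0)
    (x : Fin k) (b : ℕ) (hbv : b ≤ bvec α k x)
    (hq : ∀ y : Fin k, bvec α k y ≠ bvec α k x - b) :
    ∃ j, j < α x.1 ∧ hookLen α x.1 j = b := by
  have hv : StrictAnti (bvec α k) := bvec_strictAnti hα
  set v : Fin k → ℕ := bvec α k with hvdef
  set q : ℕ := v x - b with hqdef
  have hb0 : 1 ≤ b := by
    rcases Nat.eq_zero_or_pos b with rfl | hb0
    · exact absurd (by omega : v x = v x - 0) (hq x)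
    · exact hb0
  set S : Finset (Fin k) := Finset.univ.filter (fun y => v y < q) with hSdef
  set m : ℕ := S.card with hmdef
  have hmk : m ≤ k := by
    calc S.card ≤ Finset.univ.card := Finset.card_filter_le _ _
    _ = k := by rw [Finset.card_univ, Fintype.card_fin]
  have hS2 : ∀ y : Fin k, v y < q ↔ k - m ≤ y.1 := by
    intro y
    constructor
    · intro hy
      have hsub : Finset.Ici y ⊆ S := by
        intro t ht
        rw [hSdef, Finset.mem_filter]
        exact ⟨Finset.mem_univ _, lt_of_le_of_lt (hv.antitone (Finset.mem_Ici.mp ht)) hy⟩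
      have hcard := Finset.card_le_card hsub
      rw [Fin.card_Ici] at hcard
      have hyk : y.1 < k := y.2
      omega
    · intro hky
      by_contra hc
      have hgt : q < v y := lt_of_le_of_ne (not_lt.mp hc) (Ne.symm (hq y))
      have hsub : S ⊆ Finset.Ioi y := by
        intro t ht
        rw [hSdef, Finset.mem_filter] at ht
        exact Finset.mem_Ioi.mpr ((hv.lt_iff_gt).mp (lt_trans ht.2 hgt))
      have hcard := Finset.card_le_card hsub
      rw [Fin.card_Ioi] at hcard
      have hyk : y.1 < k := y.2
      omega
  have hmq : m ≤ q := by
    have hsub : S.image v ⊆ Finset.range q := by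
      intro z hz2
      rw [Finset.mem_image] at hz2
      obtain ⟨y, hy, rfl⟩ := hz2
      rw [hSdef, Finset.mem_filter] at hy
      exact Finset.mem_range.mpr hy.2
    have hcard := Finset.card_le_card hsub
    rw [Finset.card_image_of_injOn (hv.injective.injOn), Finset.card_range] at hcard
    exact hcard
  set c' : ℕ := k - m with hc'def
  set j : ℕ := q - m with hjdef
  have hxc : x.1 < c' := by
    have : ¬ (v x < q) := by omega
    have := (mt (hS2 x).mpr) this
    omega
  have hmk' : m < k := by omega
  have hcj1 : ∀ t, t < c' → j < α t := by
    have hc'1 : 1 ≤ c' := by omega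
    have hbig : j + 1 ≤ α (c' - 1) := by
      have hlt : c' - 1 < k := by omega
      set y : Fin k := ⟨c' - 1, hlt⟩ with hydef
      have h1 : ¬ (v y < q) := fun hc => by
        have := (hS2 y).mp hc
        rw [hydef] at this
        simp at this
        omega
      have h2 : v y ≠ q := hq y
      have h3 : v y = α (c' - 1) + (k - 1 - (c' - 1)) := rfl
      omega
    intro t ht
    have := hα (by omega : t ≤ c' - 1)
    omega
  have hcj2 : ∀ t, c' ≤ t → α t ≤ j := by
    intro t ht
    by_cases htk : t < k
    · have hc'k : c' < k := by omega
      have h1 : v ⟨c', hc'k⟩ < q := (hS2 _).mpr (by simp)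
      have h2 : v ⟨c', hc'k⟩ = α c' + (k - 1 - c') := rfl
      have h3 : α t ≤ α c' := hα ht
      omega
    · rw [hz t (by omega)]
      omega
  have hjx : j < α x.1 := hcj1 x.1 hxc
  obtain ⟨c2, hck2, hchar2, hcp2⟩ := conj_char hα hz j
  have hcc : c2 = c' := by
    have hle1 : c2 ≤ c' := by
      by_contra hcon
      push_neg at hcon
      exact absurd ((hchar2 c').mpr hcon) (not_lt.mpr (hcj2 c' le_rfl))
    have hle2 : c' ≤ c2 := by
      by_contra hcon
      push_neg at hcon
      have := (hchar2 c2).mp (hcj1 c2 hcon)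
      omega
    omega
  refine ⟨j, hjx, ?_⟩
  unfold hookLen
  rw [hcp2, hcc]
  have hvx : v x = α x.1 + (k - 1 - x.1) := rfl
  have hxk : x.1 < k := x.2
  omega

lemma cell_unique {α : ℕ → ℕ} (hα : Antitone α) (hz : ∀ i, k ≤ i → α i = 0)
    (x : Fin k) {b j j' : ℕ} (h1 : j < α x.1) (h2 : hookLen α x.1 j = b)
    (h3 : j' < α x.1) (h4 : hookLen α x.1 j' = b) : j = j' := by
  obtain ⟨c, hck, hchar, hcp⟩ := conj_char hα hz j
  obtain ⟨c', hck', hchar', hcp'⟩ := conj_char hα hz j'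
  have hxc : x.1 < c := (hchar x.1).mp h1
  have hxc' : x.1 < c' := (hchar' x.1).mp h3
  have hh1 : α x.1 + c = b + j + x.1 + 1 := by
    unfold hookLen at h2
    rw [hcp] at h2
    omega
  have hh2 : α x.1 + c' = b + j' + x.1 + 1 := by
    unfold hookLen at h4
    rw [hcp'] at h4
    omega
  by_cases hjj : j ≤ j'
  · have hcc : c' ≤ c := by
      by_contra hcon
      push_neg at hcon
      have := (hchar' c).mpr hcon
      have := (hchar c).mp (by omega)
      omega
    omega
  · have hcc : c ≤ c' := by
      by_contra hcon
      push_neg at hcon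
      have := (hchar c').mpr hcon
      have := (hchar' c').mp (by omega)
      omega
    omega

end MNSide

section KeySide
open Finset Function

lemma charValue_key (p k : ℕ) [Fact p.Prime] :
    ∀ (β : List ℕ), (∀ b ∈ β, 0 < b) → ∀ (α : ℕ → ℕ), Antitone α → (∀ i, k ≤ i → α i = 0) →
    ((charValue α β : ℤ) : ZMod p) =
      (Wop p k β) (Alt p k (bvec α k)) (fun i : Fin k => k - 1 - i.1) := by
  intro β
  induction β with
  | nil =>
      intro _ α hα hz
      have hg : StrictAnti (fun i : Fin k => k - 1 - i.1) := by
        intro i j hij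
        have h1 : j.1 < k := j.2
        have h2 : i.1 < j.1 := hij
        simp only
        omega
      rw [charValue]
      show _ = (1 : Module.End (ZMod p) (BM p k)) (Alt p k (bvec α k)) _
      rw [Module.End.one_apply, Alt_apply_strictAnti p k (bvec_strictAnti hα) hg]
      by_cases hall : ∀ i, α i = 0
      · rw [if_pos hall, if_pos, Int.cast_one]
        funext i
        have : i.1 < k := i.2
        simp only [bvec, hall i.1]
        omega
      · rw [if_neg hall, if_neg, Int.cast_zero]
        intro hc
        apply hall
        intro i
        by_cases hik : i < k
        · have := congrFun hc ⟨i, hik⟩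
          simp only [bvec] at this
          omega
        · exact hz i (by omega)
  | cons b rest ih =>
      intro hpos α hα hz
      have hb0 : 0 < b := hpos b (List.mem_cons_self)
      have hrest : ∀ c ∈ rest, 0 < c := fun c hc => hpos c (List.mem_cons_of_mem _ hc)
      rw [charValue]
      have hsupp : Function.support (fun i => ∑ᶠ (j : ℕ),
          if j < α i ∧ hookLen α i j = b then
            (-1) ^ legLen α i j * charValue (removeHook α i j) rest else 0) ⊆
          ↑(Finset.range k) := by
        intro i hi
        rw [Finset.coe_range, Set.mem_Iio]
        by_contra hik
        push_neg at hik
        apply hi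
        simp only
        apply finsum_eq_zero_of_forall_eq_zero
        intro j
        rw [if_neg]
        rintro ⟨hj, -⟩
        rw [hz i hik] at hj
        omega
      rw [finsum_eq_sum_of_support_subset _ hsupp, Finset.sum_range]
      push_cast
      show _ = (Wop p k rest * SOp p k b) (Alt p k (bvec α k)) _
      rw [Module.End.mul_apply, SOp_alt, map_sum, Finsupp.finset_sum_apply]
      apply Finset.sum_congr rfl
      intro x _
      rw [apply_ite (Wop p k rest), map_zero,
        apply_ite (fun z : BM p k => z (fun i : Fin k => k - 1 - i.1)), Finsupp.zero_apply]
      by_cases hb2 : b ≤ bvec α k x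
      · by_cases hmv : ∀ y : Fin k, bvec α k y ≠ bvec α k x - b
        · -- a valid move / valid cell
          obtain ⟨j0, hj0, hhk0⟩ := move_to_cell hα hz x b hb2 hmv
          obtain ⟨c, hcp, hchar, hxc, hck, hb1, hbv', hqv, hnr, hleg⟩ :=
            cell_data hα hz x hj0 hhk0
          obtain ⟨hA, hZ, hBV⟩ := removeHook_data hα hz x hcp hchar hxc hck hj0
          have hfs : (∑ᶠ (j : ℕ), if j < α x.1 ∧ hookLen α x.1 j = b then
              (-1) ^ legLen α x.1 j * charValue (removeHook α x.1 j) rest else 0 : ℤ)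
              = (-1) ^ legLen α x.1 j0 * charValue (removeHook α x.1 j0) rest := by
            rw [finsum_eq_single _ j0]
            · rw [if_pos ⟨hj0, hhk0⟩]
            · intro j' hne
              rw [if_neg]
              rintro ⟨h1', h2'⟩
              exact hne (cell_unique hα hz x h1' h2' hj0 hhk0)
          rw [hfs, if_pos hb2]
          have hc1k : x.1 + (c - 1 - x.1) < k := by omega
          obtain ⟨τ, hsign, hτ⟩ := cyPerm k x.1 (c - 1 - x.1) hc1k
          have hcomp : bvec (removeHook α x.1 j0) k ∘ ⇑τ =
              Function.update (bvec α k) x (bvec α k x - b) := by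
            funext s
            rw [comp_apply, hBV (τ s)]
            rcases lt_trichotomy s.1 x.1 with htx | htx | htx
            · have hfix : τ s = s := (hτ s).2.2 (Or.inl htx)
              rw [hfix, Function.update_of_ne (fun hc' => by rw [hc'] at htx; omega),
                if_pos htx]
            · have hτx : (τ s).1 = x.1 + (c - 1 - x.1) := (hτ s).1 htx
              have hsx : s = x := Fin.ext htx
              rw [hsx] at hτx
              rw [hsx, Function.update_self]
              rw [if_neg (by omega), if_neg (by omega), if_pos (by omega)]
              omega
            · by_cases htc : s.1 ≤ c - 1
              · have hτt : (τ s).1 = s.1 - 1 := (hτ s).2.1 htx (by omega)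
                rw [Function.update_of_ne (fun hc' => by rw [hc'] at htx; omega)]
                rw [if_neg (by omega), if_pos (by omega), hτt]
                have h5 : s.1 - 1 + 1 = s.1 := by omega
                rw [h5]
                rfl
              · have hfix : τ s = s := (hτ s).2.2 (Or.inr (by omega))
                rw [hfix, Function.update_of_ne (fun hc' => by rw [hc'] at htx; omega)]
                rw [if_neg (by omega), if_neg (by omega), if_neg (by omega)]
          rw [← hcomp, Alt_comp_perm, map_zsmul, Finsupp.smul_apply, hsign, hleg]
          push_cast
          rw [ih hrest _ hA hZ, zsmul_eq_mul]
          push_cast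
          ring
        · -- bead present at target position: both sides vanish
          push_neg at hmv
          obtain ⟨y, hy⟩ := hmv
          have hyx : y ≠ x := by
            intro hc'
            rw [hc'] at hy
            omega
          have hni : ¬ Function.Injective
              (Function.update (bvec α k) x (bvec α k x - b)) := by
            intro hinj
            apply hyx
            apply hinj
            rw [Function.update_self, Function.update_of_ne hyx, hy]
          have hzero : ∀ j', (if j' < α x.1 ∧ hookLen α x.1 j' = b then
              (-1) ^ legLen α x.1 j' * charValue (removeHook α x.1 j') rest else 0 : ℤ) = 0 := by
            intro j'
            rw [if_neg]
            rintro ⟨h1', h2'⟩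
            obtain ⟨c, hcp, hchar, hxc, hck, hb1, hbv', hqv, hnr, hleg⟩ :=
              cell_data hα hz x h1' h2'
            exact hnr y (by rw [hy, hqv])
          rw [finsum_eq_zero_of_forall_eq_zero hzero, Int.cast_zero, if_pos hb2,
            Alt_of_not_injective p k hni, map_zero, Finsupp.zero_apply]
      · -- no move possible: both sides vanish
        have hzero : ∀ j', (if j' < α x.1 ∧ hookLen α x.1 j' = b then
            (-1) ^ legLen α x.1 j' * charValue (removeHook α x.1 j') rest else 0 : ℤ) = 0 := by
          intro j'
          rw [if_neg]
          rintro ⟨h1', h2'⟩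
          obtain ⟨c, hcp, hchar, hxc, hck, hb1, hbv', hqv, hnr, hleg⟩ :=
            cell_data hα hz x h1' h2'
          exact hb2 hbv'
        rw [finsum_eq_zero_of_forall_eq_zero hzero, Int.cast_zero, if_neg hb2]

lemma dvd_foldr_lcm (β : List ℕ) : ∀ b ∈ β, b ∣ β.foldr Nat.lcm 1 := by
  induction β with
  | nil => intro b hb; simp at hb
  | cons a r ihl =>
      intro b hb
      rcases List.mem_cons.mp hb with rfl | hb
      · exact Nat.dvd_lcm_left _ _
      · exact dvd_trans (ihl b hb) (Nat.dvd_lcm_right _ _)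

end KeySide


/-- If `lcm` of the parts of `β` is a prime power `p ^ t` and `p` does not divide
the degree of `χ^α`, then `χ^α(β) ≠ 0`. -/
theorem stmt_3 (n : ℕ) (α : ℕ → ℕ) (β : List ℕ) (p t : ℕ)
    (hp : p.Prime) (ht : 0 < t)
    (hα : IsPartitionFun α n) (hβ : IsPartitionList β n)
    (hlcm : β.foldr Nat.lcm 1 = p ^ t)
    (h : ¬ (p : ℤ) ∣ charDegree α n) :
    charValue α β ≠ 0 := by
  haveI : Fact p.Prime := ⟨hp⟩
  obtain ⟨hαa, hfin, hsum⟩ := hα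
  obtain ⟨hsort, hposl, hsuml⟩ := hβ
  have hz : ∀ i, n + 1 ≤ i → α i = 0 := by
    intro i hi
    by_contra hc
    have h3 : i + 1 ≤ ∑ t ∈ Finset.range (i + 1), α t := by
      have hall : ∀ t ∈ Finset.range (i + 1), 1 ≤ α t := by
        intro t ht2
        have := hαa (Nat.lt_succ_iff.mp (Finset.mem_range.mp ht2))
        omega
      calc i + 1 = ∑ _t ∈ Finset.range (i + 1), 1 := by simp
        _ ≤ _ := Finset.sum_le_sum hall
    have hsub : Finset.range (i + 1) ⊆ hfin.toFinset := by
      intro t ht2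
      rw [Set.Finite.mem_toFinset, Function.mem_support]
      have := hαa (Nat.lt_succ_iff.mp (Finset.mem_range.mp ht2))
      omega
    have h2 := Finset.sum_le_sum_of_subset (f := α) hsub
    rw [← finsum_eq_sum α hfin, hsum] at h2
    omega
  have hppow : ∀ b ∈ β, ∃ s, b = p ^ s := by
    intro b hb
    have hdvd : b ∣ β.foldr Nat.lcm 1 := dvd_foldr_lcm β b hb
    rw [hlcm] at hdvd
    obtain ⟨s, _, rfl⟩ := (Nat.dvd_prime_pow hp).mp hdvd
    exact ⟨s, rfl⟩
  have h1 := charValue_key p (n + 1) β hposl α hαa hz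
  have h2 := charValue_key p (n + 1) (List.replicate n 1)
    (fun b hb => by rw [List.eq_of_mem_replicate hb]; omega) α hαa hz
  rw [Wop_eq_pow p (n + 1) β hppow, hsuml] at h1
  rw [Wop_eq_pow p (n + 1) (List.replicate n 1)
      (fun b hb => ⟨0, by rw [List.eq_of_mem_replicate hb, pow_zero]⟩),
    List.sum_replicate, smul_eq_mul, mul_one] at h2
  intro hzero
  apply h
  rw [← ZMod.intCast_zmod_eq_zero_iff_dvd]
  show ((charDegree α n : ℤ) : ZMod p) = 0
  unfold charDegree
  rw [h2, ← h1, hzero]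
  simp
end

section
/- Let α = (α₁, 1^{n−α₁}) be a hook partition of n with n − α₁ ≥ α₁ > 1. If β is a partition of n of the form (β₁,…,β_r, α₁, 1) where each β_i ≥ α₁, then χ^α(β) = 0. -/
open scoped Classical

def hookFun (a m : ℕ) : ℕ → ℕ := fun i => if i = 0 then a else if i < m + 1 then 1 else 0

lemma conjPart_hook (a m : ℕ) (ha : 1 ≤ a) (j : ℕ) :
    conjPart (hookFun a m) j = if j = 0 then m + 1 else if j < a then 1 else 0 := by
  unfold conjPart
  split_ifs with h1 h2
  · rw [show {i | j < hookFun a m i} = ↑(Finset.range (m+1)) by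
      ext i; simp [hookFun]; split_ifs <;> omega]
    rw [Set.ncard_coe_finset, Finset.card_range]
  · rw [show {i | j < hookFun a m i} = {0} by
      ext i; simp [hookFun]; split_ifs <;> omega]
    exact Set.ncard_singleton 0
  · rw [show {i | j < hookFun a m i} = ∅ by
      ext i; simp [hookFun]; split_ifs <;> omega]
    exact Set.ncard_empty _

lemma removeHook_leg (a m i : ℕ) (ha : 1 ≤ a) (hi : 1 ≤ i) (him : i ≤ m) :
    removeHook (hookFun a m) i 0 = hookFun a (i - 1) := by
  funext t
  unfold removeHook
  rw [conjPart_hook a m ha 0]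
  simp only [if_pos rfl, hookFun]
  split_ifs <;> first | omega | exact (‹False›).elim

lemma hookLen_hook (a m i j : ℕ) (ha : 1 ≤ a) :
    hookLen (hookFun a m) i j =
      (hookFun a m i - j) + ((if j = 0 then m + 1 else if j < a then 1 else 0) - i) - 1 := by
  unfold hookLen; rw [conjPart_hook a m ha j]

lemma legLen_hook (a m i j : ℕ) (ha : 1 ≤ a) :
    legLen (hookFun a m) i j =
      (if j = 0 then m + 1 else if j < a then 1 else 0) - i - 1 := by
  unfold legLen; rw [conjPart_hook a m ha j]

lemma hookLen_hook0 (a m i : ℕ) (ha : 1 ≤ a) :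
    hookLen (hookFun a m) i 0 = hookFun a m i + (m + 1 - i) - 1 := by
  unfold hookLen
  rw [conjPart_hook a m ha 0]
  simp

lemma legLen_hook0 (a m i : ℕ) (ha : 1 ≤ a) :
    legLen (hookFun a m) i 0 = m + 1 - i - 1 := by
  unfold legLen
  rw [conjPart_hook a m ha 0]
  simp

lemma charValue_hook_cons (a m b : ℕ) (ha : 1 ≤ a) (hab : a ≤ b) (hne : b ≠ a + m)
    (rest : List ℕ) :
    charValue (hookFun a m) (b :: rest) =
      if b ≤ m then (-1 : ℤ) ^ (b - 1) * charValue (hookFun a (m - b)) rest else 0 := by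
  rw [charValue]
  have key : ∀ i : ℕ,
      (∑ᶠ (j : ℕ), if j < hookFun a m i ∧ hookLen (hookFun a m) i j = b then
          (-1 : ℤ) ^ legLen (hookFun a m) i j * charValue (removeHook (hookFun a m) i j) rest
        else 0) =
      if b ≤ m ∧ i = m + 1 - b then
        (-1 : ℤ) ^ (b - 1) * charValue (hookFun a (m - b)) rest else 0 := by
    intro i
    rcases Nat.eq_zero_or_pos i with rfl | hi
    · rw [if_neg (by omega)]
      apply finsum_eq_zero_of_forall_eq_zero
      intro j
      rw [if_neg]
      rintro ⟨hj1, hj2⟩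
      rcases Nat.eq_zero_or_pos j with rfl | hj
      · rw [hookLen_hook0 a m 0 ha] at hj2
        simp only [hookFun] at hj2
        simp at hj2
        omega
      · rw [hookLen_hook a m 0 j ha] at hj2
        simp only [hookFun] at hj1 hj2
        split_ifs at hj1 hj2 <;> omega
    · by_cases him : i ≤ m
      · -- rows 1..m : only j = 0 possible
        rw [finsum_eq_single _ 0 (by
          intro j hj
          rw [if_neg]
          rintro ⟨hj1, _⟩
          simp only [hookFun] at hj1
          split_ifs at hj1 <;> omega)]
        rw [hookLen_hook0 a m i ha, legLen_hook0 a m i ha]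
        have hα : hookFun a m i = 1 := by simp only [hookFun]; split_ifs <;> omega
        rw [hα]
        by_cases hcond : m + 1 - i = b
        · rw [if_pos ⟨one_pos, by omega⟩, if_pos ⟨by omega, (by omega : i = m + 1 - b)⟩,
              removeHook_leg a m i ha hi him,
              show m + 1 - i - 1 = b - 1 by omega,
              show i - 1 = m - b by omega]
        · rw [if_neg (by rintro ⟨-, h⟩; omega), if_neg (by rintro ⟨-, h⟩; omega)]
      · -- rows beyond the hook: α i = 0
        rw [if_neg (by omega)]
        apply finsum_eq_zero_of_forall_eq_zero
        intro j
        rw [if_neg]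
        rintro ⟨hj1, -⟩
        simp only [hookFun] at hj1
        split_ifs at hj1 <;> omega
  simp only [key]
  by_cases hbm : b ≤ m
  · rw [finsum_eq_single _ (m + 1 - b) (by intro i hi; rw [if_neg (by omega)])]
    rw [if_pos ⟨hbm, rfl⟩, if_pos hbm]
  · rw [if_neg hbm]
    apply finsum_eq_zero_of_forall_eq_zero
    intro i; rw [if_neg (by omega)]

lemma charValue_hook_list (a : ℕ) (ha : 2 ≤ a) :
    ∀ L : List ℕ, (∀ b ∈ L, a ≤ b) →
      charValue (hookFun a (L.sum + 1)) (L ++ [a, 1]) = 0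
  | [] => by
    intro _
    simp only [List.sum_nil, List.nil_append, Nat.zero_add]
    rw [show ([a, 1] : List ℕ) = a :: [1] from rfl,
      charValue_hook_cons a 1 a (by omega) le_rfl (by omega), if_neg (by omega)]
  | b :: L => by
    intro hL
    have hb : a ≤ b := hL b (by simp)
    have hm : (b :: L).sum + 1 = b + (L.sum + 1) := by simp [List.sum_cons]; omega
    rw [List.cons_append, hm,
      charValue_hook_cons a (b + (L.sum + 1)) b (by omega) hb (by omega),
      if_pos (by omega), show b + (L.sum + 1) - b = L.sum + 1 by omega,
      charValue_hook_list a ha L (fun c hc => hL c (by simp [hc])), mul_zero]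


/-- For a hook `α = (a, 1^{n-a})` with `n - a ≥ a > 1` and
`β = (β₁, …, β_r, a, 1)` with all `βᵢ ≥ a`, one has `χ^α(β) = 0`. -/
theorem stmt_7 (n a : ℕ) (ha : 1 < a) (han : a ≤ n - a)
    (L : List ℕ) (hL : ∀ b ∈ L, a ≤ b)
    (hβ : IsPartitionList (L ++ [a, 1]) n) :
    charValue (fun i => if i = 0 then a else if i < n - a + 1 then 1 else 0)
      (L ++ [a, 1]) = 0 := by
  have hsum : L.sum + (a + 1) = n := by
    have := hβ.2.2
    simpa [List.sum_append] using this
  have hna : n - a = L.sum + 1 := by omega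
  show charValue (hookFun a (n - a)) (L ++ [a, 1]) = 0
  rw [hna]
  exact charValue_hook_list a ha L hL
end

section
/- Let α be a self-conjugate partition of n and β a partition of n having an even part β₁ with β₁ > n/2. Then χ^α(β) = 0. -/
open scoped Classical

/-- For an antitone, finitely supported `α`, membership in column `c` is
characterized by `i < conjPart α c`. -/
theorem conjPart_iff (α : ℕ → ℕ) (hmono : Antitone α) (hfin : (Function.support α).Finite)
    (c i : ℕ) : c < α i ↔ i < conjPart α c := by
  classical
  set S : Set ℕ := {k | c < α k} with hS
  have hSfin : S.Finite := hfin.subset (fun k hk => by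
    simp only [Function.mem_support]
    have : c < α k := hk
    omega)
  have hlow : ∀ a b : ℕ, a ≤ b → b ∈ S → a ∈ S := fun a b hab hb =>
    lt_of_lt_of_le hb (hmono hab)
  rcases S.eq_empty_or_nonempty with h | h
  · have h1 : conjPart α c = 0 := by
      simp only [conjPart, ← hS, h, Set.ncard_empty]
    have h2 : ¬ c < α i := fun hc => (Set.eq_empty_iff_forall_notMem.mp h i) hc
    simp [h1, h2]
  · have hne : hSfin.toFinset.Nonempty := by
      rwa [← Set.Finite.toFinset_nonempty hSfin] at h
    set m := hSfin.toFinset.max' hne with hm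
    have hmS : m ∈ S := by
      have := hSfin.toFinset.max'_mem hne
      rwa [Set.Finite.mem_toFinset] at this
    have hSeq : S = Set.Iic m := by
      ext k
      constructor
      · intro hk
        exact hSfin.toFinset.le_max' k (by rwa [Set.Finite.mem_toFinset])
      · intro hk
        exact hlow k m hk hmS
    have hcard : conjPart α c = m + 1 := by
      simp only [conjPart, ← hS, hSeq, ← Finset.coe_Iic, Set.ncard_coe_finset, Nat.card_Iic]
    have hmem : c < α i ↔ i ≤ m := by
      rw [← Set.mem_Iic, ← hSeq]; exact Iff.rfl
    rw [hcard, hmem]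
    omega

/-- If `α` is self-conjugate and `β` has an even part `x > n / 2`, then `χ^α(β) = 0`. -/
theorem stmt_11 (n : ℕ) (α : ℕ → ℕ) (hα : IsPartitionFun α n) (hsc : conjPart α = α)
    (β : List ℕ) (hβ : IsPartitionList β n)
    (x : ℕ) (hx : x ∈ β) (hev : Even x) (hbig : n < 2 * x) :
    charValue α β = 0 := by
  classical
  obtain ⟨hmono, hfin, hsum⟩ := hα
  have key : ∀ c i : ℕ, c < α i ↔ i < α c := by
    intro c i
    have := conjPart_iff α hmono hfin c i
    rwa [hsc] at this
  cases β with
  | nil => simp at hx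
  | cons b rest =>
    obtain ⟨hsort, hpos, hbsum⟩ := hβ
    have hbx : b = x := by
      rcases List.mem_cons.mp hx with h | h
      · exact h.symm
      · exfalso
        have hbx' : b ≥ x := List.rel_of_pairwise_cons hsort h
        have hxs : x ≤ rest.sum := List.single_le_sum (fun y _ => Nat.zero_le y) x h
        have : b + rest.sum = n := by simpa using hbsum
        omega
    subst hbx
    rw [charValue]
    apply finsum_eq_zero_of_forall_eq_zero
    intro i
    apply finsum_eq_zero_of_forall_eq_zero
    intro j
    rw [if_neg]
    rintro ⟨hj, hhook⟩
    have hconj : ∀ k, conjPart α k = α k := fun k => congrFun hsc k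
    have hij : i < α j := (key j i).mp hj
    have hhook' : (α i - j) + (α j - i) - 1 = b := by
      simp only [hookLen, hconj] at hhook; exact hhook
    by_cases h00 : i = 0 ∧ j = 0
    · obtain ⟨hi0, hj0⟩ := h00
      subst hi0; subst hj0
      obtain ⟨r, hr⟩ := hev
      omega
    · -- bound the hook length by α 0 + α 1 - 2
      have ha01 : α 1 ≤ α 0 := hmono (by omega)
      have hbnd : (α i - j ≤ α 1 ∧ α j - i ≤ α 0 - 1) ∨
          (α i - j ≤ α 0 - 1 ∧ α j - i ≤ α 1) := by
        rcases Nat.eq_zero_or_pos i with hi | hi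
        · right
          have hj1 : 1 ≤ j := by omega
          have h1 : α i ≤ α 0 := hmono (Nat.zero_le i)
          have h2 : α j ≤ α 1 := hmono hj1
          omega
        · left
          have h1 : α i ≤ α 1 := hmono hi
          have h2 : α j ≤ α 0 := hmono (Nat.zero_le j)
          omega
      have ha1 : 1 ≤ α 1 := by
        rcases Nat.eq_zero_or_pos i with hi | hi
        · have hj1 : 1 ≤ j := by omega
          have h2 : α j ≤ α 1 := hmono hj1
          omega
        · have h1 : α i ≤ α 1 := hmono hi
          omega
      have hxle : b ≤ α 0 + α 1 - 2 := by omega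
      have hxpos : 0 < b := hpos b (by simp)
      -- compute n as a finite sum over the rows
      have hsupp : Function.support α ⊆ ↑(Finset.range (α 0)) := by
        intro k hk
        have : 0 < α k := Nat.pos_of_ne_zero hk
        simpa using (key 0 k).mp this
      have hn0 : ∑ i ∈ Finset.range (α 0), α i = n := by
        rw [← hsum, finsum_eq_sum_of_support_subset α hsupp]
      by_cases ha0 : 2 ≤ α 0
      · set m := max 2 (α 1) with hm_def
        have hm2 : 2 ≤ m := le_max_left _ _
        have hm : m ≤ α 0 := by omega
        have e1 : ∑ i ∈ Finset.range 2, α i + ∑ i ∈ Finset.Ico 2 (α 0), α i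
            = ∑ i ∈ Finset.range (α 0), α i := by
          simp only [Finset.range_eq_Ico]
          exact Finset.sum_Ico_consecutive α (Nat.zero_le 2) ha0
        have e2 : ∑ i ∈ Finset.Ico 2 m, α i + ∑ i ∈ Finset.Ico m (α 0), α i
            = ∑ i ∈ Finset.Ico 2 (α 0), α i :=
          Finset.sum_Ico_consecutive _ hm2 hm
        have b1 : (m - 2) * 2 ≤ ∑ i ∈ Finset.Ico 2 m, α i := by
          calc (m - 2) * 2 = (Finset.Ico 2 m).card • 2 := by
                rw [Nat.card_Ico, smul_eq_mul]
            _ ≤ ∑ i ∈ Finset.Ico 2 m, α i := by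
                apply Finset.card_nsmul_le_sum
                intro k hk
                simp only [Finset.mem_Ico] at hk
                have hk1 : k < α 1 := by omega
                have := (key 1 k).mpr hk1
                omega
        have b2 : (α 0 - m) * 1 ≤ ∑ i ∈ Finset.Ico m (α 0), α i := by
          calc (α 0 - m) * 1 = (Finset.Ico m (α 0)).card • 1 := by
                rw [Nat.card_Ico, smul_eq_mul]
            _ ≤ ∑ i ∈ Finset.Ico m (α 0), α i := by
                apply Finset.card_nsmul_le_sum
                intro k hk
                simp only [Finset.mem_Ico] at hk
                have := (key 0 k).mpr (by omega)
                omega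
        have b3 : ∑ i ∈ Finset.range 2, α i = α 0 + α 1 := by
          simp [Finset.sum_range_succ]
        omega
      · omega
end

section
/- Let α = (r₁^{k₁},…,r_m^{k_m}) be a self-conjugate partition of n with distinct parts r₁ > ⋯ > r_m and multiplicities k_i > 0. Then r_i = k₁ + k₂ + ⋯ + k_{m−i+1} for all 1 ≤ i ≤ m, and equivalently k_i = r_{m−i+1} − r_{m−i+2} for 1 ≤ i ≤ m (with r_{m+1} = 0). -/
open scoped Classical

lemma downset_eq (S : Set ℕ) (hfin : S.Finite) (hdc : ∀ a b : ℕ, a ≤ b → b ∈ S → a ∈ S) :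
    S = Set.Iio S.ncard := by
  rcases S.eq_empty_or_nonempty with h | h
  · rw [h]; ext t; simp
  · have hne : hfin.toFinset.Nonempty := by simpa using h
    set M := hfin.toFinset.max' hne with hM
    have hMS : M ∈ S := by
      have := hfin.toFinset.max'_mem hne
      simpa using this
    have hIic : S = Set.Iic M := by
      ext t
      constructor
      · intro ht
        exact hfin.toFinset.le_max' t (by simpa using ht)
      · intro ht
        exact hdc t M ht hMS
    rw [hIic]
    have hc : (Set.Iic M).ncard = M + 1 := by
      rw [← Finset.coe_Iic, Set.ncard_coe_finset, Nat.card_Iic]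
    rw [hc]
    ext t
    simp [Nat.lt_succ_iff]

/-- For a self-conjugate `α = (r₁^{k₁}, …, r_m^{k_m})` (distinct parts `r₁ > ⋯ > r_m`,
multiplicities `kᵢ > 0`, and with `r_{m+1} = 0` by convention):
`rᵢ = k₁ + ⋯ + k_{m-i+1}` and `kᵢ = r_{m-i+1} - r_{m-i+2}` for `1 ≤ i ≤ m`. -/
theorem stmt_14 (n m : ℕ) (α : ℕ → ℕ) (r k : ℕ → ℕ)
    (hα : IsPartitionFun α n) (hsc : conjPart α = α)
    (hr : StrictAntiOn r (Set.Icc 1 m)) (hrpos : ∀ i ∈ Finset.Icc 1 m, 0 < r i)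
    (hr0 : r (m + 1) = 0)
    (hk : ∀ i ∈ Finset.Icc 1 m, 0 < k i)
    (hparts : ∀ t, α t ≠ 0 → ∃ i ∈ Finset.Icc 1 m, α t = r i)
    (hmult : ∀ i ∈ Finset.Icc 1 m, Set.ncard {t | α t = r i} = k i) :
    (∀ i ∈ Finset.Icc 1 m, r i = ∑ j ∈ Finset.Icc 1 (m - i + 1), k j) ∧
    (∀ i ∈ Finset.Icc 1 m, k i = r (m - i + 1) - r (m - i + 2)) := by
  rcases Nat.eq_zero_or_pos m with hm0 | hm
  · subst hm0
    constructor <;> · intro i hi; simp at hi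
  obtain ⟨hmono, hfin, -⟩ := hα
  -- helpers
  have hrpos' : ∀ i, 1 ≤ i → i ≤ m → 0 < r i := fun i h1 h2 =>
    hrpos i (Finset.mem_Icc.mpr ⟨h1, h2⟩)
  have hkpos : ∀ i, 1 ≤ i → i ≤ m → 0 < k i := fun i h1 h2 =>
    hk i (Finset.mem_Icc.mpr ⟨h1, h2⟩)
  have hval : ∀ t, α t ≠ 0 → ∃ j, 1 ≤ j ∧ j ≤ m ∧ α t = r j := by
    intro t ht
    obtain ⟨j, hj, hje⟩ := hparts t ht
    rw [Finset.mem_Icc] at hj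
    exact ⟨j, hj.1, hj.2, hje⟩
  have hrle : ∀ j i, 1 ≤ j → j ≤ i → i ≤ m → r i ≤ r j := by
    intro j i h1 h2 h3
    rcases eq_or_lt_of_le h2 with h | h
    · rw [h]
    · exact le_of_lt (hr (Set.mem_Icc.mpr ⟨h1, by omega⟩) (Set.mem_Icc.mpr ⟨by omega, h3⟩) h)
  have hrlt : ∀ j i, 1 ≤ j → j < i → i ≤ m → r i < r j := by
    intro j i h1 h2 h3
    exact hr (Set.mem_Icc.mpr ⟨h1, by omega⟩) (Set.mem_Icc.mpr ⟨by omega, h3⟩) h2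
  set K : ℕ → ℕ := fun i => ∑ j ∈ Finset.Icc 1 i, k j with hKdef
  have hKmono : Monotone K := by
    intro a b hab
    exact Finset.sum_le_sum_of_subset (Finset.Icc_subset_Icc_right hab)
  have hKsucc : ∀ j, K (j + 1) = K j + k (j + 1) := by
    intro j
    exact Finset.sum_Icc_succ_top (by omega) k
  have hKpos : ∀ j, 1 ≤ j → 0 < K j := by
    intro j h1
    calc 0 < k 1 := hkpos 1 le_rfl hm
    _ ≤ K j := Finset.single_le_sum (f := k) (fun _ _ => Nat.zero_le _)
        (Finset.mem_Icc.mpr ⟨le_rfl, h1⟩)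
  have hKlt : ∀ a b, a < b → b ≤ m → K a < K b := by
    intro a b hab hbm
    have h1 : K (a + 1) = K a + k (a + 1) := hKsucc a
    have h2 : 0 < k (a + 1) := hkpos (a + 1) (by omega) (by omega)
    have h3 : K (a + 1) ≤ K b := hKmono (by omega)
    omega
  -- Step 2: cardinality of {t | r i ≤ α t}
  have hsuppmem : ∀ t, α t ≠ 0 → t ∈ hfin.toFinset := by
    intro t ht
    rw [Set.Finite.mem_toFinset]
    exact ht
  have hcard : ∀ i, 1 ≤ i → i ≤ m → {t | r i ≤ α t}.ncard = K i := by
    intro i h1 h2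
    have hset : {t | r i ≤ α t} =
        ↑((Finset.Icc 1 i).biUnion (fun j => hfin.toFinset.filter (fun t => α t = r j))) := by
      ext t
      simp only [Set.mem_setOf_eq, Finset.coe_biUnion, Finset.mem_coe, Finset.mem_Icc,
        Set.mem_iUnion, Finset.mem_filter, Set.Finite.mem_toFinset, Function.mem_support]
      constructor
      · intro h
        have htne : α t ≠ 0 := by
          have := hrpos' i h1 h2; omega
        obtain ⟨j, hj1, hjm, hje⟩ := hval t htne
        refine ⟨j, ⟨hj1, ?_⟩, htne, hje⟩
        by_contra hc
        push_neg at hc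
        have := hrlt i j h1 hc hjm
        omega
      · rintro ⟨j, ⟨hj1, hji⟩, -, hje⟩
        have := hrle j i hj1 hji h2
        omega
    rw [hset, Set.ncard_coe_finset]
    rw [Finset.card_biUnion]
    · have : ∀ j ∈ Finset.Icc 1 i,
          (hfin.toFinset.filter (fun t => α t = r j)).card = k j := by
        intro j hj
        rw [Finset.mem_Icc] at hj
        have hje : {t | α t = r j} = ↑(hfin.toFinset.filter (fun t => α t = r j)) := by
          ext t
          simp only [Set.mem_setOf_eq, Finset.coe_filter, Set.Finite.mem_toFinset,
            Function.mem_support, Set.mem_setOf_eq]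
          constructor
          · intro h
            have := hrpos' j hj.1 (by omega)
            exact ⟨by omega, h⟩
          · exact fun h => h.2
        have := hmult j (Finset.mem_Icc.mpr ⟨hj.1, by omega⟩)
        rw [hje, Set.ncard_coe_finset] at this
        exact this
      rw [Finset.sum_congr rfl this]
    · intro a ha b hb hab
      rw [Finset.mem_coe, Finset.mem_Icc] at ha hb
      rw [Function.onFun, Finset.disjoint_left]
      intro t hta htb
      rw [Finset.mem_filter] at hta htb
      apply hab
      exact hr.injOn (Set.mem_Icc.mpr ⟨ha.1, by omega⟩) (Set.mem_Icc.mpr ⟨hb.1, by omega⟩)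
        (hta.2.symm.trans htb.2)
  -- Step 3: row description
  have hrow : ∀ i, 1 ≤ i → i ≤ m → ∀ t, (r i ≤ α t ↔ t < K i) := by
    intro i h1 h2 t
    have hfin' : {t | r i ≤ α t}.Finite := by
      apply hfin.subset
      intro t ht
      simp only [Set.mem_setOf_eq] at ht
      have := hrpos' i h1 h2
      simp only [Function.mem_support]
      omega
    have hdc : ∀ a b : ℕ, a ≤ b → b ∈ {t | r i ≤ α t} → a ∈ {t | r i ≤ α t} := by
      intro a b hab hb
      simp only [Set.mem_setOf_eq] at *
      exact le_trans hb (hmono hab)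
    have heq := downset_eq _ hfin' hdc
    rw [hcard i h1 h2] at heq
    constructor
    · intro h
      have : t ∈ {t | r i ≤ α t} := h
      rw [heq] at this
      exact this
    · intro h
      have : t ∈ Set.Iio (K i) := h
      rw [← heq] at this
      exact this
  -- conjPart pointwise
  have hconj : ∀ j, α j = Set.ncard {t | j < α t} := by
    intro j
    conv_lhs => rw [← hsc]
    rfl
  -- Step 4: column values
  have hcol : ∀ i, 1 ≤ i → i ≤ m → ∀ j, r (i + 1) ≤ j → j < r i → α j = K i := by
    intro i h1 h2 j hj1 hj2
    have hset : {t | j < α t} = {t | r i ≤ α t} := by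
      ext t
      simp only [Set.mem_setOf_eq]
      constructor
      · intro h
        obtain ⟨j', hj'1, hj'm, hje⟩ := hval t (by omega)
        have hji : j' ≤ i := by
          by_contra hc
          push_neg at hc
          have hi1m : i + 1 ≤ j' := hc
          have : r j' ≤ r (i + 1) := hrle (i + 1) j' (by omega) hi1m hj'm
          omega
        have := hrle j' i hj'1 hji h2
        omega
      · intro h
        omega
    rw [hconj j, hset]
    exact hcard i h1 h2
  -- Step 5: K m = r 1
  have hzero : ∀ j, r 1 ≤ j → α j = 0 := by
    intro j hj
    have hset : {t | j < α t} = ∅ := by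
      ext t
      simp only [Set.mem_setOf_eq, Set.mem_empty_iff_false, iff_false, not_lt]
      by_contra hc
      push_neg at hc
      obtain ⟨j', hj'1, hj'm, hje⟩ := hval t (by omega)
      have := hrle 1 j' le_rfl hj'1 hj'm
      omega
    rw [hconj j, hset, Set.ncard_empty]
  have hexr1 : ∃ s, α s = r 1 := by
    have h1 := hmult 1 (Finset.mem_Icc.mpr ⟨le_rfl, hm⟩)
    have h2 : {t | α t = r 1}.Nonempty := by
      apply Set.nonempty_of_ncard_ne_zero
      rw [h1]
      exact (hkpos 1 le_rfl hm).ne'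
    exact h2
  have hposlt : ∀ t, t < r 1 → α t ≠ 0 := by
    intro t ht
    obtain ⟨s, hs⟩ := hexr1
    have hne : {u | t < α u}.Nonempty := ⟨s, by simp only [Set.mem_setOf_eq]; omega⟩
    have hfin' : {u | t < α u}.Finite := by
      apply hfin.subset
      intro u hu
      simp only [Set.mem_setOf_eq] at hu
      simp only [Function.mem_support]
      omega
    have := (Set.ncard_pos hfin').mpr hne
    rw [hconj t]
    omega
  have hKmr : K m = r 1 := by
    by_contra hne
    rcases Nat.lt_or_ge (K m) (r 1) with h | h
    · have h1 := hposlt (K m) h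
      have h2 := (hrow m (by omega) le_rfl (K m))
      have h3 : ¬ r m ≤ α (K m) := by
        rw [h2]; omega
      obtain ⟨j', hj'1, hj'm, hje⟩ := hval (K m) h1
      have := hrle j' m hj'1 hj'm le_rfl
      omega
    · have h : r 1 < K m := by omega
      have h1 := hzero (r 1) le_rfl
      have h2 := (hrow m (by omega) le_rfl (r 1)).mpr h
      have := hrpos' m (by omega) le_rfl
      omega
  -- Step 6: existence  r j = K i
  have hex : ∀ j : ℕ, ∃ i : ℕ, 1 ≤ j → j ≤ m → (1 ≤ i ∧ i ≤ m ∧ r j = K i) := by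
    intro j
    by_cases hjm : 1 ≤ j ∧ j ≤ m
    swap
    · exact ⟨1, fun h1 h2 => absurd ⟨h1, h2⟩ hjm⟩
    obtain ⟨hj1, hjm'⟩ := hjm
    set t0 := K j - 1 with ht0
    have hKj : 1 ≤ K j := hKpos j hj1
    have ht0lt : t0 < K j := by omega
    have hαt0 : r j ≤ α t0 := (hrow j hj1 hjm' t0).mpr ht0lt
    have hαt0j : α t0 = r j := by
      obtain ⟨j', hj'1, hj'm, hje⟩ := hval t0 (by have := hrpos' j hj1 hjm'; omega)
      have hj'le : j' ≤ j := by
        by_contra hc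
        push_neg at hc
        have := hrlt j j' hj1 hc hj'm
        omega
      rcases eq_or_lt_of_le hj'le with h | h
      · rw [hje, h]
      · exfalso
        have hrow' := (hrow j' hj'1 hj'm t0).mp (by omega)
        have := hKlt j' j h hjm'
        have hgap : K j' + 1 ≤ K j := by
          have := hKlt j' j h hjm'
          omega
        omega
    -- find the column block containing t0
    have ht0r1 : t0 < r 1 := by
      have := hKmono hjm'
      omega
    set F : Finset ℕ := (Finset.Icc 1 m).filter (fun i => t0 < r i) with hF
    have hFne : F.Nonempty := by
      refine ⟨1, ?_⟩
      rw [hF, Finset.mem_filter, Finset.mem_Icc]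
      exact ⟨⟨le_rfl, hm⟩, ht0r1⟩
    set i := F.max' hFne with hi
    have hiF : i ∈ F := F.max'_mem hFne
    rw [hF, Finset.mem_filter, Finset.mem_Icc] at hiF
    obtain ⟨⟨hi1, him⟩, hit0⟩ := hiF
    have hnext : r (i + 1) ≤ t0 := by
      rcases eq_or_lt_of_le him with h | h
      · rw [h, hr0]; omega
      · by_contra hc
        push_neg at hc
        have hmem : i + 1 ∈ F := by
          rw [hF, Finset.mem_filter, Finset.mem_Icc]
          exact ⟨⟨by omega, by omega⟩, hc⟩
        have := F.le_max' (i + 1) hmem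
        omega
    have := hcol i hi1 him t0 hnext hit0
    exact ⟨i, fun _ _ => ⟨hi1, him, by omega⟩⟩
  choose g hg using hex
  have hg1 : ∀ j, 1 ≤ j → j ≤ m → 1 ≤ g j := fun j h1 h2 => (hg j h1 h2).1
  have hg2 : ∀ j, 1 ≤ j → j ≤ m → g j ≤ m := fun j h1 h2 => (hg j h1 h2).2.1
  have hg3 : ∀ j, 1 ≤ j → j ≤ m → r j = K (g j) := fun j h1 h2 => (hg j h1 h2).2.2
  have hganti : ∀ j j', 1 ≤ j → j < j' → j' ≤ m → g j' < g j := by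
    intro j j' h1 h2 h3
    have hrj : r j' < r j := hrlt j j' h1 h2 h3
    rw [hg3 j h1 (by omega), hg3 j' (by omega) h3] at hrj
    by_contra hc
    push_neg at hc
    have := hKmono hc
    omega
  have hL1 : ∀ d j, 1 ≤ j → j + d ≤ m → g (j + d) + d ≤ g j := by
    intro d
    induction d with
    | zero => intro j _ _; simp
    | succ d ih =>
      intro j h1 h2
      have ha := hganti (j + d) (j + d + 1) (by omega) (by omega) (by omega)
      have hb := ih j h1 (by omega)
      have : g (j + (d + 1)) = g (j + d + 1) := by ring_nf
      omega
  have hgeq : ∀ j, 1 ≤ j → j ≤ m → g j = m + 1 - j := by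
    intro j h1 h2
    have hlo : g (j + (m - j)) + (m - j) ≤ g j := hL1 (m - j) j h1 (by omega)
    have hjm : j + (m - j) = m := by omega
    rw [hjm] at hlo
    have hgm := hg1 m (by omega) le_rfl
    have hhi : g (1 + (j - 1)) + (j - 1) ≤ g 1 := hL1 (j - 1) 1 le_rfl (by omega)
    have h1j : 1 + (j - 1) = j := by omega
    rw [h1j] at hhi
    have hg1m := hg2 1 le_rfl hm
    omega
  have main1 : ∀ i, 1 ≤ i → i ≤ m → r i = K (m + 1 - i) := by
    intro i h1 h2
    rw [hg3 i h1 h2, hgeq i h1 h2]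
  constructor
  · intro i hi
    rw [Finset.mem_Icc] at hi
    have h := main1 i hi.1 hi.2
    have he : m - i + 1 = m + 1 - i := by omega
    rw [he]
    exact h
  · intro i hi
    rw [Finset.mem_Icc] at hi
    have hA : r (m - i + 1) = K i := by
      have h := main1 (m - i + 1) (by omega) (by omega)
      have : m + 1 - (m - i + 1) = i := by omega
      rw [h, this]
    rcases eq_or_lt_of_le hi.1 with h1 | h1
    · -- i = 1
      have hB : r (m - i + 2) = 0 := by
        have : m - i + 2 = m + 1 := by omega
        rw [this, hr0]
      have hK1 : K 1 = k 1 := by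
        rw [hKdef]
        simp
      rw [hA, hB, ← h1, hK1]
      omega
    · -- i ≥ 2
      have hB : r (m - i + 2) = K (i - 1) := by
        have h := main1 (m - i + 2) (by omega) (by omega)
        have he : m + 1 - (m - i + 2) = i - 1 := by omega
        rw [h, he]
      have hstep : K i = K (i - 1) + k i := by
        have := hKsucc (i - 1)
        have he : i - 1 + 1 = i := by omega
        rw [he] at this
        exact this
      rw [hA, hB]
      omega
end

section
/- Let α be a self-conjugate partition of n with at least two rows and two columns. Then h^α_{1,1} > h^α_{1,2} = h^α_{2,1} > h^α_{i,j} for all nodes (i,j) ∉ {(1,1),(1,2),(2,1)}, and 2·h^α_{1,2} ≤ n. -/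
open scoped Classical

lemma hook_key (α : ℕ → ℕ) (hm : Antitone α) (hf : (Function.support α).Finite)
    (j i : ℕ) : j < α i ↔ i < conjPart α j := by
  have hS : {k | j < α k}.Finite := hf.subset (by
    intro k hk
    simp only [Set.mem_setOf_eq] at hk
    simp only [Function.mem_support]
    omega)
  unfold conjPart
  constructor
  · intro h
    have hsub : Set.Iic i ⊆ {k | j < α k} := fun k hk =>
      lt_of_lt_of_le h (hm hk)
    have hle := Set.ncard_le_ncard hsub hS
    rw [← Finset.coe_Iic, Set.ncard_coe_finset, Nat.card_Iic] at hle
    omega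
  · intro h
    by_contra hc
    push_neg at hc
    have hsub : {k | j < α k} ⊆ Set.Iio i := by
      intro k hk
      simp only [Set.mem_setOf_eq] at hk
      by_contra hki
      simp only [Set.mem_Iio, not_lt] at hki
      exact absurd (lt_of_lt_of_le hk (le_trans (hm hki) hc)) (lt_irrefl j)
    have hle := Set.ncard_le_ncard hsub (Set.finite_Iio i)
    rw [← Finset.coe_Iio, Set.ncard_coe_finset, Nat.card_Iio] at hle
    omega

/-- For a self-conjugate `α` with at least two rows and two columns:
`h_{1,1} > h_{1,2} = h_{2,1} > h_{i,j}` for every other node, and `2·h_{1,2} ≤ n`. -/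
theorem stmt_18 (n : ℕ) (α : ℕ → ℕ) (hα : IsPartitionFun α n) (hsc : conjPart α = α)
    (hrows : 0 < α 1) (hcols : 2 ≤ α 0) :
    hookLen α 0 1 < hookLen α 0 0 ∧ hookLen α 0 1 = hookLen α 1 0 ∧
    (∀ i j, j < α i → ¬(i = 0 ∧ j = 0) → ¬(i = 0 ∧ j = 1) → ¬(i = 1 ∧ j = 0) →
      hookLen α i j < hookLen α 0 1) ∧
    2 * hookLen α 0 1 ≤ n := by
  obtain ⟨hmono, hfin, hsum⟩ := hα
  have hkey : ∀ j i, j < α i ↔ i < α j := by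
    intro j i
    rw [hook_key α hmono hfin j i, hsc]
  have h10 : α 1 ≤ α 0 := hmono (by norm_num)
  refine ⟨?_, ?_, ?_, ?_⟩
  · simp only [hookLen, hsc]
    omega
  · simp only [hookLen, hsc]
    omega
  · intro i j hj h1 h2 h3
    simp only [hookLen, hsc]
    rcases Nat.eq_zero_or_pos i with hi | hi
    · subst hi
      have hj2 : 2 ≤ j := by omega
      have hα1 : α j ≤ α 1 := hmono (by omega)
      omega
    · rcases Nat.eq_zero_or_pos j with hj0 | hj0
      · subst hj0
        have hi2 : 2 ≤ i := by omega
        have hαi : α i ≤ α 1 := hmono hi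
        omega
      · have hαi : α i ≤ α 1 := hmono hi
        have hαj : α j ≤ α 1 := hmono hj0
        omega
  · -- 2 * hookLen α 0 1 ≤ n
    set m := max 2 (α 1) with hm
    have hm2 : 2 ≤ m := le_max_left _ _
    have hmα1 : α 1 ≤ m := le_max_right _ _
    have hmα0 : m ≤ α 0 := max_le hcols h10
    have hsupp : Function.support α ⊆ (Finset.range (α 0) : Set ℕ) := by
      intro k hk
      simp only [Function.mem_support] at hk
      simp only [Finset.coe_range, Set.mem_Iio]
      exact (hkey 0 k).mp (by omega)
    have hn : ∑ i ∈ Finset.range (α 0), α i = n := by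
      rw [← hsum]
      exact (finsum_eq_sum_of_support_subset α hsupp).symm
    have hsplit : ∑ i ∈ Finset.range (α 0), α i =
        (∑ i ∈ Finset.Ico 0 2, α i) + ((∑ i ∈ Finset.Ico 2 m, α i) +
          ∑ i ∈ Finset.Ico m (α 0), α i) := by
      rw [Finset.sum_Ico_consecutive _ hm2 hmα0,
        Finset.sum_Ico_consecutive _ (by omega : (0:ℕ) ≤ 2) (by omega : 2 ≤ α 0),
        Finset.range_eq_Ico]
    have h02 : ∑ i ∈ Finset.Ico 0 2, α i = α 0 + α 1 := by
      rw [show Finset.Ico 0 2 = Finset.range 2 by rw [Finset.range_eq_Ico]]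
      simp [Finset.sum_range_succ]
    have hb1 : (Finset.Ico 2 m).card • 2 ≤ ∑ i ∈ Finset.Ico 2 m, α i := by
      apply Finset.card_nsmul_le_sum
      intro i hi
      rw [Finset.mem_Ico] at hi
      have : i < α 1 := by omega
      have := (hkey 1 i).mpr this
      omega
    have hb2 : (Finset.Ico m (α 0)).card • 1 ≤ ∑ i ∈ Finset.Ico m (α 0), α i := by
      apply Finset.card_nsmul_le_sum
      intro i hi
      rw [Finset.mem_Ico] at hi
      have : i < α 0 := hi.2
      have := (hkey 0 i).mpr this
      omega
    rw [Nat.card_Ico, smul_eq_mul] at hb1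
    rw [Nat.card_Ico, smul_eq_mul] at hb2
    simp only [hookLen, hsc]
    omega
end
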